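/- Let (S,f) and (T,g) be pong data of type (k,m), with equivariant lifts (S̃,f̃) and (T̃,g̃), such that T = Q(f̃(S̃)). Then the composite g̃ ∘ f̃ is a lifted partial permutation on k letters and satisfies: (1) weight(g̃∘f) ≤ weight(g) + weight(f) componentwise; (2) cross(g̃∘f) ≤ cross(g) + cross(f); (3) every component of weight(g) + weight(f) − weight(g̃∘f) is a nonnegative integer (i.e. the difference lies in ℤ^m ⊂ (½ℤ)^m). -/

import Mathlib

open scoped Classical TensorProduct

noncomputable section

namespace PongPaper

/-! ## The group `G_m` acting on `ℤ`, and lifted partial permutations -/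

/-- The modulus `2m - 2`. -/
def Nm (m : ℕ) : ℤ := 2 * (m : ℤ) - 2

/-- The reflection `x ↦ 1 - x` (i.e. `r_{1/2}`). -/
def r1 (x : ℤ) : ℤ := 1 - x

/-- The reflection `x ↦ 2m - 1 - x` (i.e. `r_{m - 1/2}`). -/
def r2 (m : ℕ) (x : ℤ) : ℤ := 2 * (m : ℤ) - 1 - x

/-- The quotient map `Q : ℤ → {1, …, m-1}` for the action of
`G_m = ⟨r1, r2⟩` on `ℤ`:  `Q i` is the unique `1 ≤ t ≤ m-1` with
`t ≡ i` or `t ≡ 1 - i  (mod 2m-2)`. -/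
def Qmap (m : ℕ) (i : ℤ) : ℤ :=
  if (i - 1) % Nm m ≤ (m : ℤ) - 2 then (i - 1) % Nm m + 1 else Nm m - (i - 1) % Nm m

/-- A lifted partial permutation on `k` letters (for the group `G_m`):
a `G_m`-invariant subset `S ⊆ ℤ`, together with a `G_m`-equivariant map
`f : S → ℤ` (normalized to be the identity away from `S`), such that `S/G_m`
has `k` elements and the induced map `S/G_m → ℤ/G_m` is injective. -/
structure LPP (m k : ℕ) where
  S : Set ℤ
  f : ℤ → ℤ
  inv1 : ∀ x ∈ S, r1 x ∈ S
  inv2 : ∀ x ∈ S, r2 m x ∈ S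
  eqv1 : ∀ x ∈ S, f (r1 x) = r1 (f x)
  eqv2 : ∀ x ∈ S, f (r2 m x) = r2 m (f x)
  cardk : (Qmap m '' S).ncard = k
  injQ : ∀ x ∈ S, ∀ y ∈ S, Qmap m (f x) = Qmap m (f y) → Qmap m x = Qmap m y
  ext_id : ∀ x, x ∉ S → f x = x

/-- Pong data of type `(k, m)`: a `k`-element subset `S ⊆ {1, …, m-1}` and a map
`f : S → ℤ` (normalized to be the identity away from `S`) with `Q ∘ f` injective. -/
structure PongData (m k : ℕ) where
  S : Finset ℤ
  sub : ∀ x ∈ S, 1 ≤ x ∧ x ≤ (m : ℤ) - 1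
  cardk : S.card = k
  f : ℤ → ℤ
  injQ : ∀ x ∈ S, ∀ y ∈ S, Qmap m (f x) = Qmap m (f y) → x = y
  ext_id : ∀ x, x ∉ S → f x = x

variable {m k : ℕ}

/-- The set of lifted strands of `a` crossing the level `t - 1/2`. -/
def levelSet (a : LPP m k) (t : ℤ) : Set ℤ :=
  {x | x ∈ a.S ∧ min x (a.f x) < t ∧ t ≤ max x (a.f x)}

/-- The `i`-th component of the weight vector of `a` (the index `i : Fin m`
corresponds to the level `i + 1/2`, i.e. to the component `i+1` in the paper). -/
def weight (a : LPP m k) (i : Fin m) : ℚ := ((levelSet a ((i : ℤ) + 1)).ncard : ℚ) / 2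

/-- The equivalence on pairs of integers generated by the swap and the diagonal
`G_m`-action (the elements of `G_m` are `x ↦ x + n(2m-2)` and `x ↦ 1 + n(2m-2) - x`). -/
def GmRel (m : ℕ) (p q : ℤ × ℤ) : Prop :=
  ∃ n : ℤ,
    q = (p.1 + n * Nm m, p.2 + n * Nm m) ∨
    q = (p.2 + n * Nm m, p.1 + n * Nm m) ∨
    q = (1 + n * Nm m - p.1, 1 + n * Nm m - p.2) ∨
    q = (1 + n * Nm m - p.2, 1 + n * Nm m - p.1)

/-- Equivalence classes of (unordered, `G_m`-orbit) pairs of integers. -/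
def CrossCl (m : ℕ) := Quot (GmRel m)

/-- Lifted crossings of a lifted partial permutation. -/
def liftedCrossings (a : LPP m k) : Set (ℤ × ℤ) :=
  {p | p.1 ∈ a.S ∧ p.2 ∈ a.S ∧ (p.1 - p.2).sign ≠ (a.f p.1 - a.f p.2).sign}

/-- The set of crossings of `a`: equivalence classes of lifted crossings. -/
def crossings (a : LPP m k) : Set (CrossCl m) :=
  Quot.mk (GmRel m) '' liftedCrossings a

/-- The crossing number `cross(a)`. -/
def crossNum (a : LPP m k) : ℕ := (crossings a).ncard

/-- The underlying function of the resolution of `f` at the crossing `(i,j)`: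
it agrees with `f` away from the `G_m`-orbits of `i` and `j` and sends
`γ·i ↦ γ·f(j)` and `γ·j ↦ γ·f(i)` for all `γ ∈ G_m`. -/
def resolveFun (m : ℕ) (f : ℤ → ℤ) (i j x : ℤ) : ℤ :=
  if (x - i) % Nm m = 0 then f j + (x - i)
  else if (x + i - 1) % Nm m = 0 then x + i - f j
  else if (x - j) % Nm m = 0 then f i + (x - j)
  else if (x + j - 1) % Nm m = 0 then x + j - f i
  else f x

/-- The resolution of a lifted partial permutation at a (lifted) crossing `(i,j)`. -/
def resLPP (a : LPP m k) (i j : ℤ) : LPP m k :=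
  if h : ∃ c : LPP m k, c.S = a.S ∧ ∀ x ∈ a.S, c.f x = resolveFun m a.f i j x
  then h.choose else a

/-- The composite `g̃ ∘ f̃` of two lifted partial permutations. -/
def compLPP (f g : LPP m k) : LPP m k :=
  if h : ∃ c : LPP m k, c.S = f.S ∧ ∀ x ∈ f.S, c.f x = g.f (f.f x)
  then h.choose else f

/-! ### Auxiliary lemmas -/

section Aux

variable {m k : ℕ}

lemma Nm_pos (hm : 2 ≤ m) : 0 < Nm m := by
  have : (2:ℤ) ≤ (m:ℤ) := by exact_mod_cast hm
  simp only [Nm]; omega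

lemma Nm_even : Nm m = 2 * ((m:ℤ) - 1) := by simp only [Nm]; ring

private lemma emod_zero_small {N x : ℤ} (hN : 0 < N) (h1 : -N < x) (h2 : x < N)
    (h : x % N = 0) : x = 0 := by
  rcases le_or_gt 0 x with hx | hx
  · rw [Int.emod_eq_of_lt hx h2] at h; exact h
  · have h3 : (x + N) % N = 0 := by
      have := Int.add_mul_emod_self_left x N 1
      rw [mul_one] at this; rw [this]; exact h
    rw [Int.emod_eq_of_lt (by omega) (by omega)] at h3; omega

private lemma mul_emod_zero (N n : ℤ) : (n * N) % N = 0 := by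
  simpa using Int.add_mul_emod_self_left 0 N n

/-- Characterization of equality of `Qmap` values. -/
lemma Qmap_eq_iff (hm : 2 ≤ m) (a b : ℤ) :
    Qmap m a = Qmap m b ↔ (a - b) % Nm m = 0 ∨ (a + b - 1) % Nm m = 0 := by
  have hN : 0 < Nm m := Nm_pos hm
  set N := Nm m with hNdef
  set ra := (a - 1) % N with hra
  set rb := (b - 1) % N with hrb
  have hra0 : 0 ≤ ra := Int.emod_nonneg _ (by omega)
  have hra1 : ra < N := Int.emod_lt_of_pos _ hN
  have hrb0 : 0 ≤ rb := Int.emod_nonneg _ (by omega)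
  have hrb1 : rb < N := Int.emod_lt_of_pos _ hN
  have hda := Int.mul_ediv_add_emod (a - 1) N
  have hdb := Int.mul_ediv_add_emod (b - 1) N
  set qa := (a - 1) / N with hqa
  set qb := (b - 1) / N with hqb
  have e1 : (a - b) % N = (ra - rb) % N := by
    have : a - b = (ra - rb) + N * (qa - qb) := by linarith
    rw [this, mul_comm N (qa - qb), Int.add_mul_emod_self_right]
  have e2 : (a + b - 1) % N = (ra + rb + 1) % N := by
    have : a + b - 1 = (ra + rb + 1) + N * (qa + qb) := by linarith
    rw [this, mul_comm N (qa + qb), Int.add_mul_emod_self_right]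
  have e1' : (a - b) % N = 0 ↔ ra = rb := by
    rw [e1]
    constructor
    · intro h; have := emod_zero_small hN (by omega) (by omega) h; omega
    · intro h; rw [h]; simp
  have e2' : (a + b - 1) % N = 0 ↔ ra + rb + 1 = N := by
    rw [e2]
    constructor
    · intro h
      have h4 : (ra + rb + 1 - N) % N = ((ra + rb + 1) % N) := by
        have h5 := Int.add_mul_emod_self_right (a := ra + rb + 1 - N) (b := 1) (c := N)
        rw [one_mul] at h5
        rw [← h5]; ring_nf
      have := emod_zero_small hN (by omega) (by omega) (h4.trans h)
      omega
    · intro h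
      have : ra + rb + 1 = 1 * N := by omega
      rw [this]; simp [mul_emod_zero]
  have hmZ : (2:ℤ) ≤ (m:ℤ) := by exact_mod_cast hm
  have hNval : N = 2 * (m:ℤ) - 2 := rfl
  rw [e1', e2']
  unfold Qmap
  rw [← hNdef, ← hra, ← hrb]
  split_ifs <;> omega

/-- Orbit characterization. -/
lemma Qmap_eq_iff_orbit (hm : 2 ≤ m) (a b : ℤ) :
    Qmap m a = Qmap m b ↔ ∃ n : ℤ, b = a + n * Nm m ∨ b = 1 - a + n * Nm m := by
  have hN : 0 < Nm m := Nm_pos hm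
  rw [Qmap_eq_iff hm]
  constructor
  · rintro (h | h)
    · obtain ⟨c, hc⟩ := Int.dvd_of_emod_eq_zero h
      exact ⟨-c, Or.inl (by linarith)⟩
    · obtain ⟨c, hc⟩ := Int.dvd_of_emod_eq_zero h
      exact ⟨c, Or.inr (by linarith)⟩
  · rintro ⟨n, h | h⟩
    · left; rw [h]; have : a - (a + n * Nm m) = (-n) * Nm m := by ring
      rw [this]; exact mul_emod_zero _ _
    · right; rw [h]; have : a + (1 - a + n * Nm m) - 1 = n * Nm m := by ring
      rw [this]; exact mul_emod_zero _ _

end Aux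
section Aux2

variable {m k : ℕ}

lemma r2r1 (z : ℤ) : r2 m (r1 z) = z + Nm m := by simp [r1, r2, Nm]; ring
lemma r1r2 (z : ℤ) : r1 (r2 m z) = z - Nm m := by simp [r1, r2, Nm]; ring

/-- Translation invariance/equivariance. -/
lemma shift_mem (a : LPP m k) (n : ℤ) {x : ℤ} (hx : x ∈ a.S) :
    x + n * Nm m ∈ a.S ∧ a.f (x + n * Nm m) = a.f x + n * Nm m := by
  induction n using Int.induction_on with
  | zero => simpa using hx
  | succ n ih =>
    have h1 : x + (n + 1 : ℤ) * Nm m = r2 m (r1 (x + n * Nm m)) := by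
      rw [r2r1]; ring
    obtain ⟨ihS, ihf⟩ := ih
    have hr1 : r1 (x + n * Nm m) ∈ a.S := a.inv1 _ ihS
    constructor
    · rw [h1]; exact a.inv2 _ hr1
    · rw [h1, a.eqv2 _ hr1, a.eqv1 _ ihS, ihf]
      simp [r1, r2, Nm]; ring
  | pred n ih =>
    have h1 : x + (-n - 1 : ℤ) * Nm m = r1 (r2 m (x + (-n) * Nm m)) := by
      rw [r1r2]; ring
    obtain ⟨ihS, ihf⟩ := ih
    have hr2 : r2 m (x + (-n) * Nm m) ∈ a.S := a.inv2 _ ihS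
    constructor
    · rw [h1]; exact a.inv1 _ hr2
    · rw [h1, a.eqv1 _ hr2, a.eqv2 _ ihS, ihf]
      simp [r1, r2, Nm]; ring

/-- Reflection invariance/equivariance. -/
lemma refl_mem (a : LPP m k) {x : ℤ} (hx : x ∈ a.S) :
    1 - x ∈ a.S ∧ a.f (1 - x) = 1 - a.f x := by
  have h1 : (1 - x) = r1 x := rfl
  rw [h1]
  exact ⟨a.inv1 _ hx, a.eqv1 _ hx⟩

/-- Orbit description of elements with the same `Qmap` value. -/
lemma orbit_cases (hm : 2 ≤ m) (a : LPP m k) {x y : ℤ} (hx : x ∈ a.S)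
    (hq : Qmap m y = Qmap m x) :
    y ∈ a.S ∧ ∃ n : ℤ, (y = x + n * Nm m ∧ a.f y = a.f x + n * Nm m) ∨
      (y = 1 - x + n * Nm m ∧ a.f y = 1 - a.f x + n * Nm m) := by
  obtain ⟨n, h | h⟩ := (Qmap_eq_iff_orbit hm x y).mp hq.symm
  · obtain ⟨hS, hf⟩ := shift_mem a n hx
    exact ⟨h ▸ hS, n, Or.inl ⟨h, h ▸ hf⟩⟩
  · obtain ⟨hS1, hf1⟩ := refl_mem a hx
    obtain ⟨hS, hf⟩ := shift_mem a n hS1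
    rw [hf1] at hf
    exact ⟨h ▸ hS, n, Or.inr ⟨h, by rw [h, hf]⟩⟩

lemma Nm_ne_zero (hm : 2 ≤ m) : Nm m ≠ 0 := (Nm_pos hm).ne'

/-- parity helper : `2 * z = 1 + n * Nm m` is impossible. -/
lemma parity_contra (hm : 2 ≤ m) {z n : ℤ} (h : 2 * z = 1 + n * Nm m) : False := by
  have h2 : n * Nm m = 2 * (n * ((m:ℤ) - 1)) := by rw [Nm_even]; ring
  omega

/-- `f` is injective on `S`. -/
lemma f_injOn (hm : 2 ≤ m) (a : LPP m k) : Set.InjOn a.f a.S := by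
  intro x hx y hy hfe
  have hq : Qmap m (a.f y) = Qmap m (a.f x) := by rw [hfe]
  have hq2 : Qmap m y = Qmap m x := a.injQ y hy x hx (by rw [hfe])
  obtain ⟨-, n, ⟨h1, h2⟩ | ⟨h1, h2⟩⟩ := orbit_cases hm a hx hq2
  · have h3 : n * Nm m = 0 := by linear_combination -h2 - hfe
    have hn : n = 0 := by
      rcases mul_eq_zero.mp h3 with h | h
      · exact h
      · exact absurd h (Nm_ne_zero hm)
    rw [h1, hn]; ring
  · exact (parity_contra hm (n := n) (z := a.f y) (by linear_combination h2 - hfe)).elim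

/-- `f` reflects translations. -/
lemma f_reflects_shift (hm : 2 ≤ m) (a : LPP m k) {x y : ℤ} (n : ℤ)
    (hx : x ∈ a.S) (hy : y ∈ a.S) (h : a.f y = a.f x + n * Nm m) :
    y = x + n * Nm m := by
  have hq2 : Qmap m y = Qmap m x := by
    apply a.injQ y hy x hx
    rw [h]
    exact ((Qmap_eq_iff_orbit hm _ _).mpr ⟨n, Or.inl (by ring)⟩).symm
  obtain ⟨-, n', ⟨h1, h2⟩ | ⟨h1, h2⟩⟩ := orbit_cases hm a hx hq2
  · have h3 : (n' - n) * Nm m = 0 := by linear_combination h - h2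
    have hn : n' = n := by
      rcases mul_eq_zero.mp h3 with hh | hh
      · omega
      · exact absurd hh (Nm_ne_zero hm)
    rw [h1, hn]
  · exact (parity_contra hm (n := n' - n) (z := a.f x) (by linear_combination h2 - h)).elim

/-- `f` reflects reflections. -/
lemma f_reflects_refl (hm : 2 ≤ m) (a : LPP m k) {x y : ℤ} (n : ℤ)
    (hx : x ∈ a.S) (hy : y ∈ a.S) (h : a.f y = 1 + n * Nm m - a.f x) :
    y = 1 + n * Nm m - x := by
  have hq2 : Qmap m y = Qmap m x := by
    apply a.injQ y hy x hx
    rw [h]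
    exact ((Qmap_eq_iff_orbit hm _ _).mpr ⟨n, Or.inr (by ring)⟩).symm
  obtain ⟨-, n', ⟨h1, h2⟩ | ⟨h1, h2⟩⟩ := orbit_cases hm a hx hq2
  · exact (parity_contra hm (n := n - n') (z := a.f x) (by linear_combination h - h2)).elim
  · have h3 : (n' - n) * Nm m = 0 := by linear_combination h - h2
    have hn : n' = n := by
      rcases mul_eq_zero.mp h3 with hh | hh
      · omega
      · exact absurd hh (Nm_ne_zero hm)
    rw [h1, hn]; ring

/-- Complement of `S` is invariant. -/
lemma not_mem_shift (a : LPP m k) (n : ℤ) {x : ℤ} (hx : x ∉ a.S) : x + n * Nm m ∉ a.S := by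
  intro h
  apply hx
  have h2 := (shift_mem a (-n) h).1
  have h3 : x + n * Nm m + (-n) * Nm m = x := by ring
  rwa [h3] at h2

/-- Global equivariance for translations (using `ext_id`). -/
lemma f_equiv_shift (a : LPP m k) (n x : ℤ) : a.f (x + n * Nm m) = a.f x + n * Nm m := by
  by_cases hx : x ∈ a.S
  · exact (shift_mem a n hx).2
  · rw [a.ext_id x hx, a.ext_id _ (not_mem_shift a n hx)]

/-- Global equivariance for reflections (using `ext_id`). -/
lemma f_equiv_refl (a : LPP m k) (n x : ℤ) : a.f (1 + n * Nm m - x) = 1 + n * Nm m - a.f x := by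
  by_cases hx : x ∈ a.S
  · obtain ⟨hS1, hf1⟩ := refl_mem a hx
    have h1 : 1 + n * Nm m - x = (1 - x) + n * Nm m := by ring
    rw [h1, (shift_mem a n hS1).2, hf1]; ring
  · have hnx : 1 + n * Nm m - x ∉ a.S := by
      intro h
      obtain ⟨hS1, -⟩ := refl_mem a h
      have h2 : 1 - (1 + n * Nm m - x) = x + (-n) * Nm m := by ring
      rw [h2] at hS1
      exact not_mem_shift a (-n) hx hS1
    rw [a.ext_id x hx, a.ext_id _ hnx]

end Aux2
section Aux3

variable {m k : ℕ}

lemma Qmap_range (hm : 2 ≤ m) (i : ℤ) : 1 ≤ Qmap m i ∧ Qmap m i ≤ (m:ℤ) - 1 := by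
  have hN : 0 < Nm m := Nm_pos hm
  have h0 : 0 ≤ (i - 1) % Nm m := Int.emod_nonneg _ (by omega)
  have h1 : (i - 1) % Nm m < Nm m := Int.emod_lt_of_pos _ hN
  have hmZ : (2:ℤ) ≤ (m:ℤ) := by exact_mod_cast hm
  have hNval : Nm m = 2 * (m:ℤ) - 2 := rfl
  unfold Qmap
  split_ifs <;> omega

lemma mem_levelSet (a : LPP m k) (t x : ℤ) :
    x ∈ levelSet a t ↔ x ∈ a.S ∧ ((x < t ∧ t ≤ a.f x) ∨ (a.f x < t ∧ t ≤ x)) := by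
  simp only [levelSet, Set.mem_setOf_eq, min_lt_iff, le_max_iff]
  constructor
  · rintro ⟨h1, h2, h3⟩; exact ⟨h1, by omega⟩
  · rintro ⟨h1, h2⟩; exact ⟨h1, by omega, by omega⟩

lemma levelSet_subset (a : LPP m k) (t : ℤ) : levelSet a t ⊆ a.S := fun x hx => hx.1

lemma levelSet_finite (hm : 2 ≤ m) (a : LPP m k) (t : ℤ) : (levelSet a t).Finite := by
  have key : ∀ q : ℤ, ({x | x ∈ levelSet a t ∧ Qmap m x = q}).Finite := by
    intro q
    rcases Set.eq_empty_or_nonempty {x | x ∈ levelSet a t ∧ Qmap m x = q} with he | ⟨x0, hx0l, hx0q⟩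
    · rw [he]; exact Set.finite_empty
    · have hx0S : x0 ∈ a.S := ((mem_levelSet a t x0).mp hx0l).1
      apply Set.Finite.subset (Set.finite_Icc (t - |a.f x0 - x0|) (t + |a.f x0 - x0|))
      rintro x ⟨hxl, hxq⟩
      obtain ⟨-, n, hcase⟩ := orbit_cases hm a hx0S (hxq.trans hx0q.symm)
      have hd : a.f x - x = a.f x0 - x0 ∨ a.f x - x = -(a.f x0 - x0) := by
        rcases hcase with ⟨h1, h2⟩ | ⟨h1, h2⟩
        · left; linear_combination h2 - h1
        · right; linear_combination h2 - h1
      have hcross := ((mem_levelSet a t x).mp hxl).2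
      have habs1 : -(|a.f x0 - x0|) ≤ a.f x0 - x0 := neg_abs_le _
      have habs2 : a.f x0 - x0 ≤ |a.f x0 - x0| := le_abs_self _
      simp only [Set.mem_Icc]
      omega
  have hsub : levelSet a t ⊆ ⋃ q ∈ Set.Icc (1:ℤ) ((m:ℤ) - 1), {x | x ∈ levelSet a t ∧ Qmap m x = q} := by
    intro x hx
    simp only [Set.mem_iUnion, Set.mem_Icc, Set.mem_setOf_eq]
    exact ⟨Qmap m x, ⟨(Qmap_range hm x).1, (Qmap_range hm x).2⟩, hx, rfl⟩
  exact Set.Finite.subset ((Set.finite_Icc _ _).biUnion (fun q _ => key q)) hsub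

/-- Bound on displacements. -/
lemma disp_bound (hm : 2 ≤ m) (a : LPP m k) :
    ∃ D : ℤ, 0 ≤ D ∧ ∀ x ∈ a.S, |a.f x - x| ≤ D := by
  have hN : 0 < Nm m := Nm_pos hm
  have hfin : ((fun x => |a.f x - x|) '' (a.S ∩ Set.Icc 1 (Nm m))).Finite :=
    Set.Finite.image _ ((Set.finite_Icc _ _).inter_of_right _)
  obtain ⟨D0, hD0⟩ := hfin.bddAbove
  refine ⟨max D0 0, le_max_right _ _, fun x hx => ?_⟩
  set n := -((x - 1) / Nm m) with hn
  have hdm := Int.mul_ediv_add_emod (x - 1) (Nm m)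
  have h0 : 0 ≤ (x - 1) % Nm m := Int.emod_nonneg _ (by omega)
  have h1 : (x - 1) % Nm m < Nm m := Int.emod_lt_of_pos _ hN
  have hx' : x + n * Nm m = (x - 1) % Nm m + 1 := by
    rw [hn]; linear_combination -hdm
  obtain ⟨hS', hf'⟩ := shift_mem a n hx
  have himg : |a.f (x + n * Nm m) - (x + n * Nm m)| ∈
      (fun x => |a.f x - x|) '' (a.S ∩ Set.Icc 1 (Nm m)) :=
    ⟨x + n * Nm m, ⟨hS', by rw [hx']; constructor <;> omega⟩, rfl⟩
  have hle : |a.f (x + n * Nm m) - (x + n * Nm m)| ≤ D0 := hD0 himg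
  have heq : a.f (x + n * Nm m) - (x + n * Nm m) = a.f x - x := by rw [hf']; ring
  rw [heq] at hle
  exact le_trans hle (le_max_left _ _)

lemma sign_cases (x : ℤ) :
    (0 < x ∧ x.sign = 1) ∨ (x = 0 ∧ x.sign = 0) ∨ (x < 0 ∧ x.sign = -1) := by
  rcases lt_trichotomy 0 x with h | h | h
  · exact Or.inl ⟨h, Int.sign_eq_one_iff_pos.mpr h⟩
  · exact Or.inr (Or.inl ⟨h.symm, by simp [← h]⟩)
  · exact Or.inr (Or.inr ⟨h, Int.sign_eq_neg_one_iff_neg.mpr h⟩)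

/-- `GmRel` is an equivalence relation. -/
lemma gmRel_equivalence (m : ℕ) : Equivalence (GmRel m) := by
  constructor
  · intro p; exact ⟨0, Or.inl (by simp)⟩
  · rintro ⟨p1, p2⟩ ⟨q1, q2⟩ ⟨n, h | h | h | h⟩ <;>
      simp only [Prod.mk.injEq] at h <;> obtain ⟨ha, hb⟩ := h <;> subst ha <;> subst hb <;>
      first
      | (refine ⟨-n, Or.inl ?_⟩; simp only [Prod.mk.injEq]; constructor <;> ring1)
      | (refine ⟨-n, Or.inr (Or.inl ?_)⟩; simp only [Prod.mk.injEq]; constructor <;> ring1)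
      | (refine ⟨n, Or.inr (Or.inr (Or.inl ?_))⟩; simp only [Prod.mk.injEq]; constructor <;> ring1)
      | (refine ⟨n, Or.inr (Or.inr (Or.inr ?_))⟩; simp only [Prod.mk.injEq]; constructor <;> ring1)
  · rintro ⟨p1, p2⟩ ⟨q1, q2⟩ ⟨s1, s2⟩ ⟨n, h | h | h | h⟩ ⟨n', h' | h' | h' | h'⟩ <;>
      simp only [Prod.mk.injEq] at h h' <;> obtain ⟨ha, hb⟩ := h <;> obtain ⟨hc, hd⟩ := h' <;>
      subst hc <;> subst hd <;> subst ha <;> subst hb <;>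
      first
      | (refine ⟨n + n', Or.inl ?_⟩; simp only [Prod.mk.injEq]; constructor <;> ring1)
      | (refine ⟨n + n', Or.inr (Or.inl ?_)⟩; simp only [Prod.mk.injEq]; constructor <;> ring1)
      | (refine ⟨n + n', Or.inr (Or.inr (Or.inl ?_))⟩; simp only [Prod.mk.injEq]; constructor <;> ring1)
      | (refine ⟨n + n', Or.inr (Or.inr (Or.inr ?_))⟩; simp only [Prod.mk.injEq]; constructor <;> ring1)
      | (refine ⟨n' - n, Or.inl ?_⟩; simp only [Prod.mk.injEq]; constructor <;> ring1)
      | (refine ⟨n' - n, Or.inr (Or.inl ?_)⟩; simp only [Prod.mk.injEq]; constructor <;> ring1)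
      | (refine ⟨n' - n, Or.inr (Or.inr (Or.inl ?_))⟩; simp only [Prod.mk.injEq]; constructor <;> ring1)
      | (refine ⟨n' - n, Or.inr (Or.inr (Or.inr ?_))⟩; simp only [Prod.mk.injEq]; constructor <;> ring1)

/-- The map on pairs induced by `f` respects `GmRel`. -/
lemma gmrel_map (a : LPP m k) {p q : ℤ × ℤ} (h : GmRel m p q) :
    GmRel m (a.f p.1, a.f p.2) (a.f q.1, a.f q.2) := by
  obtain ⟨n, h | h | h | h⟩ := h <;> rw [h] <;> refine ⟨n, ?_⟩
  · exact Or.inl (by simp [f_equiv_shift])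
  · exact Or.inr (Or.inl (by simp [f_equiv_shift]))
  · exact Or.inr (Or.inr (Or.inl (by simp [f_equiv_refl])))
  · exact Or.inr (Or.inr (Or.inr (by simp [f_equiv_refl])))

/-- The map on crossing classes induced by `f`. -/
def Fmap (a : LPP m k) : CrossCl m → CrossCl m :=
  Quot.lift (fun p => Quot.mk (GmRel m) (a.f p.1, a.f p.2))
    (fun _ _ h => Quot.sound (gmrel_map a h))

lemma crossings_finite (hm : 2 ≤ m) (a : LPP m k) : (crossings a).Finite := by
  obtain ⟨D, hD0, hD⟩ := disp_bound hm a
  have hN : 0 < Nm m := Nm_pos hm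
  set R := liftedCrossings a ∩ (Set.Icc (1:ℤ) (Nm m) ×ˢ Set.Icc (1 - 2*D) (Nm m + 2*D)) with hR
  have hRfin : R.Finite :=
    Set.Finite.inter_of_right ((Set.finite_Icc _ _).prod (Set.finite_Icc _ _)) _
  apply Set.Finite.subset (hRfin.image (Quot.mk (GmRel m)))
  rintro κ ⟨⟨i, j⟩, hij, rfl⟩
  set n := -((i - 1) / Nm m) with hn
  have hdm := Int.mul_ediv_add_emod (i - 1) (Nm m)
  have h0 : 0 ≤ (i - 1) % Nm m := Int.emod_nonneg _ (by omega)
  have h1 : (i - 1) % Nm m < Nm m := Int.emod_lt_of_pos _ hN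
  have hi' : i + n * Nm m = (i - 1) % Nm m + 1 := by rw [hn]; linear_combination -hdm
  obtain ⟨hiS, hjS, hsgn⟩ := hij
  obtain ⟨hiS', hif⟩ := shift_mem a n hiS
  obtain ⟨hjS', hjf⟩ := shift_mem a n hjS
  have hde : (i + n * Nm m) - (j + n * Nm m) = i - j := by ring
  have hdf : a.f (i + n * Nm m) - a.f (j + n * Nm m) = a.f i - a.f j := by
    rw [hif, hjf]; ring
  have hij' : (i + n * Nm m, j + n * Nm m) ∈ liftedCrossings a := by
    refine ⟨hiS', hjS', ?_⟩
    simpa only [hde, hdf] using hsgn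
  have hDi := abs_le.mp (hD i hiS)
  have hDj := abs_le.mp (hD j hjS)
  have hijb : |i - j| ≤ 2 * D := by
    rcases sign_cases (i - j) with ⟨hx, hs⟩ | ⟨hx, hs⟩ | ⟨hx, hs⟩
    · rcases sign_cases (a.f i - a.f j) with ⟨hy, hs'⟩ | ⟨hy, hs'⟩ | ⟨hy, hs'⟩
      · rw [hs, hs'] at hsgn; exact absurd rfl hsgn
      · rw [abs_of_pos hx]; omega
      · rw [abs_of_pos hx]; omega
    · have hz : a.f i - a.f j = 0 := by
        have hij0 : i = j := by omega
        rw [hij0]; ring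
      rw [hs, hz, Int.sign_zero] at hsgn
      exact absurd rfl hsgn
    · rcases sign_cases (a.f i - a.f j) with ⟨hy, hs'⟩ | ⟨hy, hs'⟩ | ⟨hy, hs'⟩
      · rw [abs_of_neg hx]; omega
      · rw [abs_of_neg hx]; omega
      · rw [hs, hs'] at hsgn; exact absurd rfl hsgn
  refine ⟨(i + n * Nm m, j + n * Nm m), ⟨hij', ?_⟩, ?_⟩
  · have habs := abs_le.mp hijb
    constructor
    · simp only [Set.mem_Icc]; omega
    · simp only [Set.mem_Icc]; omega
  · exact (Quot.sound ⟨n, Or.inl rfl⟩).symm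

end Aux3
section Main

variable {m k : ℕ}

/-- The key counting identity for level sets of a composite. -/
lemma level_card (hm : 2 ≤ m) (f g c : LPP m k)
    (hT : Qmap m '' g.S = Qmap m '' (f.f '' f.S))
    (hgS : ∀ x ∈ f.S, f.f x ∈ g.S)
    (hcS : c.S = f.S) (hcf : ∀ x ∈ f.S, c.f x = g.f (f.f x)) (t : ℤ) :
    (levelSet g t).ncard + (levelSet f t).ncard
      = (levelSet c t).ncard + 2 * ((levelSet f t) \ (levelSet c t)).ncard := by
  have finA : (levelSet c t).Finite := levelSet_finite hm c t
  have finB : (levelSet f t).Finite := levelSet_finite hm f t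
  set A := levelSet c t with hA
  set B := levelSet f t with hB
  have hAS : A ⊆ f.S := fun x hx => hcS ▸ hx.1
  have hBS : B ⊆ f.S := levelSet_subset f t
  have hC : levelSet g t = f.f '' ((A \ B) ∪ (B \ A)) := by
    ext y
    constructor
    · intro hy
      have hyS : y ∈ g.S := hy.1
      have h1 : Qmap m y ∈ Qmap m '' (f.f '' f.S) := by rw [← hT]; exact ⟨y, hyS, rfl⟩
      obtain ⟨z, ⟨x, hx, rfl⟩, hQ⟩ := h1
      obtain ⟨n, hcase⟩ := (Qmap_eq_iff_orbit hm (f.f x) y).mp hQ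
      obtain ⟨x', hx'S, hfx'⟩ : ∃ x', x' ∈ f.S ∧ f.f x' = y := by
        rcases hcase with h | h
        · exact ⟨x + n * Nm m, (shift_mem f n hx).1, by rw [(shift_mem f n hx).2, ← h]⟩
        · refine ⟨1 - x + n * Nm m, (shift_mem f n (refl_mem f hx).1).1, ?_⟩
          rw [(shift_mem f n (refl_mem f hx).1).2, (refl_mem f hx).2, h]
      subst hfx'
      have hycross := ((mem_levelSet g t (f.f x')).mp hy).2
      have hcx' : c.f x' = g.f (f.f x') := hcf x' hx'S
      by_cases hBm : x' ∈ B
      · refine ⟨x', Or.inr ⟨hBm, ?_⟩, rfl⟩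
        intro hAm
        have h2 := ((mem_levelSet c t x').mp hAm).2
        rw [hcx'] at h2
        have h3 := ((mem_levelSet f t x').mp hBm).2
        omega
      · refine ⟨x', Or.inl ⟨?_, hBm⟩, rfl⟩
        have h3 : ¬ (x' ∈ f.S ∧ ((x' < t ∧ t ≤ f.f x') ∨ (f.f x' < t ∧ t ≤ x'))) := by
          rw [← mem_levelSet f t x']; exact hBm
        have h4 : ¬ ((x' < t ∧ t ≤ f.f x') ∨ (f.f x' < t ∧ t ≤ x')) := fun h => h3 ⟨hx'S, h⟩
        rw [mem_levelSet c t x', hcx']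
        exact ⟨hcS ▸ hx'S, by omega⟩
    · rintro ⟨x, hx | hx, rfl⟩
      · obtain ⟨hxA, hxB⟩ := hx
        have hxS : x ∈ f.S := hAS hxA
        have h2 := ((mem_levelSet c t x).mp hxA).2
        rw [hcf x hxS] at h2
        have h3 : ¬ (x ∈ f.S ∧ ((x < t ∧ t ≤ f.f x) ∨ (f.f x < t ∧ t ≤ x))) := by
          rw [← mem_levelSet f t x]; exact hxB
        have h4 : ¬ ((x < t ∧ t ≤ f.f x) ∨ (f.f x < t ∧ t ≤ x)) := fun h => h3 ⟨hxS, h⟩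
        rw [mem_levelSet g t]
        exact ⟨hgS x hxS, by omega⟩
      · obtain ⟨hxB, hxA⟩ := hx
        have hxS : x ∈ f.S := hBS hxB
        have h2 := ((mem_levelSet f t x).mp hxB).2
        have h3 : ¬ (x ∈ c.S ∧ ((x < t ∧ t ≤ c.f x) ∨ (c.f x < t ∧ t ≤ x))) := by
          rw [← mem_levelSet c t x]; exact hxA
        have h4 : ¬ ((x < t ∧ t ≤ c.f x) ∨ (c.f x < t ∧ t ≤ x)) := fun h => h3 ⟨hcS ▸ hxS, h⟩
        rw [hcf x hxS] at h4
        rw [mem_levelSet g t]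
        exact ⟨hgS x hxS, by omega⟩
  have hdisj : Disjoint (A \ B) (B \ A) :=
    Set.disjoint_left.mpr (fun x hx1 hx2 => hx2.2 hx1.1)
  have hinj : Set.InjOn f.f ((A \ B) ∪ (B \ A)) := by
    apply (f_injOn hm f).mono
    rintro x (hx | hx)
    · exact hAS hx.1
    · exact hBS hx.1
  have hCcard : (levelSet g t).ncard = (A \ B).ncard + (B \ A).ncard := by
    rw [hC, Set.ncard_image_of_injOn hinj,
      Set.ncard_union_eq hdisj finA.diff finB.diff]
  have hAcard := Set.ncard_inter_add_ncard_diff_eq_ncard A B finA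
  have hBcard := Set.ncard_inter_add_ncard_diff_eq_ncard B A finB
  rw [Set.inter_comm B A] at hBcard
  omega

/-- Subadditivity of crossing numbers. -/
lemma cross_sub (hm : 2 ≤ m) (f g c : LPP m k)
    (hgS : ∀ x ∈ f.S, f.f x ∈ g.S)
    (hcS : c.S = f.S) (hcf : ∀ x ∈ f.S, c.f x = g.f (f.f x)) :
    crossNum c ≤ crossNum g + crossNum f := by
  have finc := crossings_finite hm c
  have finff := crossings_finite hm f
  have fing := crossings_finite hm g
  have himg : ∀ κ ∈ crossings c \ crossings f, Fmap f κ ∈ crossings g := by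
    rintro κ ⟨hκc, hκf⟩
    obtain ⟨p, hp, rfl⟩ := hκc
    have hp1 : p.1 ∈ f.S := hcS ▸ hp.1
    have hp2 : p.2 ∈ f.S := hcS ▸ hp.2.1
    have hsgn : (p.1 - p.2).sign ≠ (g.f (f.f p.1) - g.f (f.f p.2)).sign := by
      have := hp.2.2
      rwa [hcf _ hp1, hcf _ hp2] at this
    have heq : (p.1 - p.2).sign = (f.f p.1 - f.f p.2).sign := by
      by_contra hne
      exact hκf ⟨p, ⟨hp1, hp2, hne⟩, rfl⟩
    exact ⟨(f.f p.1, f.f p.2), ⟨hgS _ hp1, hgS _ hp2, by rw [← heq]; exact hsgn⟩, rfl⟩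
  have hinj : Set.InjOn (Fmap f) (crossings c \ crossings f) := by
    intro κ1 hκ1 κ2 hκ2 he
    obtain ⟨p, hp, rfl⟩ := hκ1.1
    obtain ⟨q, hq, rfl⟩ := hκ2.1
    have hp1 : p.1 ∈ f.S := hcS ▸ hp.1
    have hp2 : p.2 ∈ f.S := hcS ▸ hp.2.1
    have hq1 : q.1 ∈ f.S := hcS ▸ hq.1
    have hq2 : q.2 ∈ f.S := hcS ▸ hq.2.1
    have he' : Quot.mk (GmRel m) (f.f p.1, f.f p.2) = Quot.mk (GmRel m) (f.f q.1, f.f q.2) := he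
    have hrel : GmRel m (f.f p.1, f.f p.2) (f.f q.1, f.f q.2) :=
      (gmRel_equivalence m).eqvGen_iff.mp (Quot.eq.mp he')
    obtain ⟨n, h | h | h | h⟩ := hrel <;> rw [Prod.mk.injEq] at h <;> obtain ⟨h1, h2⟩ := h
    · have e1 : q.1 = p.1 + n * Nm m := f_reflects_shift hm f n hp1 hq1 h1
      have e2 : q.2 = p.2 + n * Nm m := f_reflects_shift hm f n hp2 hq2 h2
      exact Quot.sound ⟨n, Or.inl (Prod.ext_iff.mpr ⟨e1, e2⟩)⟩
    · have e1 : q.1 = p.2 + n * Nm m := f_reflects_shift hm f n hp2 hq1 h1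
      have e2 : q.2 = p.1 + n * Nm m := f_reflects_shift hm f n hp1 hq2 h2
      exact Quot.sound ⟨n, Or.inr (Or.inl (Prod.ext_iff.mpr ⟨e1, e2⟩))⟩
    · have e1 : q.1 = 1 + n * Nm m - p.1 := f_reflects_refl hm f n hp1 hq1 h1
      have e2 : q.2 = 1 + n * Nm m - p.2 := f_reflects_refl hm f n hp2 hq2 h2
      exact Quot.sound ⟨n, Or.inr (Or.inr (Or.inl (Prod.ext_iff.mpr ⟨e1, e2⟩)))⟩
    · have e1 : q.1 = 1 + n * Nm m - p.2 := f_reflects_refl hm f n hp2 hq1 h1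
      have e2 : q.2 = 1 + n * Nm m - p.1 := f_reflects_refl hm f n hp1 hq2 h2
      exact Quot.sound ⟨n, Or.inr (Or.inr (Or.inr (Prod.ext_iff.mpr ⟨e1, e2⟩)))⟩
  have h1 : (crossings c ∩ crossings f).ncard ≤ crossNum f :=
    Set.ncard_le_ncard Set.inter_subset_right finff
  have h2 : (crossings c \ crossings f).ncard ≤ crossNum g := by
    rw [← Set.ncard_image_of_injOn hinj]
    refine Set.ncard_le_ncard ?_ fing
    rintro y ⟨κ, hκ, rfl⟩
    exact himg κ hκ
  have h3 := Set.ncard_inter_add_ncard_diff_eq_ncard (crossings c) (crossings f) finc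
  unfold crossNum at *
  omega

end Main
/-- If `(S,f)` and `(T,g)` are (lifts of) pong data with
`T = Q(f̃(S̃))`, then the composite `g̃ ∘ f̃` is a lifted partial permutation `c`
and satisfies `weight(c) ≤ weight(g) + weight(f)` componentwise,
`cross(c) ≤ cross(g) + cross(f)`, and
`weight(g) + weight(f) - weight(c) ∈ ℤ^m ⊆ (½ℤ)^m` (componentwise a
nonnegative integer). -/
theorem statement_1 (m k : ℕ) (hm : 2 ≤ m) (f g : LPP m k)
    (hT : Qmap m '' g.S = Qmap m '' (f.f '' f.S)) :
    ∃ c : LPP m k, c.S = f.S ∧ (∀ x ∈ f.S, c.f x = g.f (f.f x)) ∧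
      (∀ i : Fin m, weight c i ≤ weight g i + weight f i) ∧
      crossNum c ≤ crossNum g + crossNum f ∧
      (∀ i : Fin m, ∃ n : ℕ, weight g i + weight f i - weight c i = (n : ℚ)) := by
  have hgS : ∀ x ∈ f.S, f.f x ∈ g.S := by
    intro x hx
    have h1 : Qmap m (f.f x) ∈ Qmap m '' g.S := by
      rw [hT]; exact ⟨f.f x, ⟨x, hx, rfl⟩, rfl⟩
    obtain ⟨y, hy, hQ⟩ := h1
    exact (orbit_cases hm g hy hQ.symm).1
  refine ⟨{ S := f.S
            f := fun x => if x ∈ f.S then g.f (f.f x) else x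
            inv1 := f.inv1
            inv2 := f.inv2
            eqv1 := ?_
            eqv2 := ?_
            cardk := f.cardk
            injQ := ?_
            ext_id := fun x hx => if_neg hx }, rfl, fun x hx => if_pos hx, ?_, ?_, ?_⟩
  · intro x hx
    rw [if_pos (f.inv1 x hx), if_pos hx, f.eqv1 x hx, g.eqv1 _ (hgS x hx)]
  · intro x hx
    rw [if_pos (f.inv2 x hx), if_pos hx, f.eqv2 x hx, g.eqv2 _ (hgS x hx)]
  · intro x hx y hy h
    simp only [if_pos hx, if_pos hy] at h
    exact f.injQ x hx y hy (g.injQ _ (hgS x hx) _ (hgS y hy) h)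
  all_goals
    set c : LPP m k :=
      { S := f.S
        f := fun x => if x ∈ f.S then g.f (f.f x) else x
        inv1 := f.inv1
        inv2 := f.inv2
        eqv1 := by
          intro x hx
          rw [if_pos (f.inv1 x hx), if_pos hx, f.eqv1 x hx, g.eqv1 _ (hgS x hx)]
        eqv2 := by
          intro x hx
          rw [if_pos (f.inv2 x hx), if_pos hx, f.eqv2 x hx, g.eqv2 _ (hgS x hx)]
        cardk := f.cardk
        injQ := by
          intro x hx y hy h
          simp only [if_pos hx, if_pos hy] at h
          exact f.injQ x hx y hy (g.injQ _ (hgS x hx) _ (hgS y hy) h)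
        ext_id := fun x hx => if_neg hx } with hc
  · -- weight inequality
    intro i
    have hl := level_card hm f g c hT hgS rfl (fun x hx => if_pos hx) ((i : ℤ) + 1)
    have hq : ((levelSet g ((i:ℤ)+1)).ncard : ℚ) + ((levelSet f ((i:ℤ)+1)).ncard : ℚ)
        = ((levelSet c ((i:ℤ)+1)).ncard : ℚ)
          + 2 * (((levelSet f ((i:ℤ)+1)) \ (levelSet c ((i:ℤ)+1))).ncard : ℚ) := by
      exact_mod_cast hl
    simp only [weight]
    have hnn : (0:ℚ) ≤ (((levelSet f ((i:ℤ)+1)) \ (levelSet c ((i:ℤ)+1))).ncard : ℚ) :=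
      Nat.cast_nonneg _
    linarith
  · -- crossing inequality
    exact cross_sub hm f g c hgS rfl (fun x hx => if_pos hx)
  · -- integrality
    intro i
    refine ⟨((levelSet f ((i:ℤ)+1)) \ (levelSet c ((i:ℤ)+1))).ncard, ?_⟩
    have hl := level_card hm f g c hT hgS rfl (fun x hx => if_pos hx) ((i : ℤ) + 1)
    have hq : ((levelSet g ((i:ℤ)+1)).ncard : ℚ) + ((levelSet f ((i:ℤ)+1)).ncard : ℚ)
        = ((levelSet c ((i:ℤ)+1)).ncard : ℚ)
          + 2 * (((levelSet f ((i:ℤ)+1)) \ (levelSet c ((i:ℤ)+1))).ncard : ℚ) := by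
      exact_mod_cast hl
    simp only [weight]
    linarith

end PongPaper
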